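/- Let Φ : (M₁,Ω₁) → (M₂,Ω₂) be a deterministic (multiplicative) state-preserving Markov map with adjoint Φ^♯. Then the contraction U_Φ satisfies U_Φ* A₂ U_Φ = Φ^♯(A₂) for all A₂ ∈ M₂, and the isometry Λ_{Φ^♯} is a co-isometry as well: Λ_{Φ^♯} Λ_{Φ^♯}* = I on L_{Φ^♯}. -/

import Mathlib

open scoped InnerProductSpace ComplexOrder
open ContinuousLinearMap (adjoint)

noncomputable section

/-- Complete positivity of a map `Φ` relative to a subset `M` of operators: matrix
amplifications preserve positivity, expressed on vectors. -/
def IsCP {H K : Type*} [NormedAddCommGroup H] [InnerProductSpace ℂ H]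
    [NormedAddCommGroup K] [InnerProductSpace ℂ K]
    (M : Set (H →L[ℂ] H)) (Φ : (H →L[ℂ] H) →ₗ[ℂ] (K →L[ℂ] K)) : Prop :=
  ∀ (n : ℕ) (B : Fin n → Fin n → (H →L[ℂ] H)),
    (∀ i j, B i j ∈ M) →
    (∀ v : Fin n → H, 0 ≤ ∑ i, ∑ j, ⟪v i, (B i j) (v j)⟫_ℂ) →
    ∀ w : Fin n → K, 0 ≤ ∑ i, ∑ j, ⟪w i, (Φ (B i j)) (w j)⟫_ℂ

/-- The Stinespring space `L_Φ` of a (completely positive) map `Φ`, defined on the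
subset `M` of `B(H)` and taking values in `B(K)`: the separation-completion of the
algebraic tensor product `M ⊗ K` with respect to the semi-inner product
`⟨A ⊗ h, X ⊗ k⟩ = ⟨h, Φ(A* X) k⟩`, presented abstractly as a Hilbert space `L`
together with the bilinear map `emb A h = [A ⊗ h]` having dense span. -/
structure StinespringData {H K : Type*}
    [NormedAddCommGroup H] [InnerProductSpace ℂ H] [CompleteSpace H]
    [NormedAddCommGroup K] [InnerProductSpace ℂ K] [CompleteSpace K]
    (M : Set (H →L[ℂ] H)) (Φ : (H →L[ℂ] H) →ₗ[ℂ] (K →L[ℂ] K))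
    (L : Type*) [NormedAddCommGroup L] [InnerProductSpace ℂ L] [CompleteSpace L] where
  emb : (H →L[ℂ] H) →ₗ[ℂ] K →ₗ[ℂ] L
  inner_emb : ∀ A X : H →L[ℂ] H, A ∈ M → X ∈ M → ∀ h k : K,
    ⟪emb A h, emb X k⟫_ℂ = ⟪h, Φ (star A * X) k⟫_ℂ
  dense_span :
    (Submodule.span ℂ {x : L | ∃ A ∈ M, ∃ h : K, x = emb A h}).topologicalClosure = ⊤
/-- `Ω` is a cyclic vector for the set of operators `M`. -/
def IsCyclicVec {H : Type*} [NormedAddCommGroup H] [InnerProductSpace ℂ H]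
    (M : Set (H →L[ℂ] H)) (Ω : H) : Prop :=
  (Submodule.span ℂ {x : H | ∃ A ∈ M, x = A Ω}).topologicalClosure = ⊤

/-- `Ω` is a separating vector for the set of operators `M`. -/
def IsSeparatingVec {H : Type*} [NormedAddCommGroup H] [InnerProductSpace ℂ H]
    (M : Set (H →L[ℂ] H)) (Ω : H) : Prop :=
  ∀ A ∈ M, A Ω = 0 → A = 0

/-- `Φ` preserves the vector states given by `Ω₁`, `Ω₂` on the algebra `M`. -/
def IsStatePreserving {H K : Type*} [NormedAddCommGroup H] [InnerProductSpace ℂ H]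
    [NormedAddCommGroup K] [InnerProductSpace ℂ K]
    (M : Set (H →L[ℂ] H)) (Ω₁ : H) (Ω₂ : K)
    (Φ : (H →L[ℂ] H) →ₗ[ℂ] (K →L[ℂ] K)) : Prop :=
  ∀ A ∈ M, ⟪Ω₂, Φ A Ω₂⟫_ℂ = ⟪Ω₁, A Ω₁⟫_ℂ


private lemma inner_ext_dense' {E : Type*} [NormedAddCommGroup E] [InnerProductSpace ℂ E]
    [CompleteSpace E] {S : Set E}
    (hS : (Submodule.span ℂ S).topologicalClosure = ⊤) {u v : E}
    (h : ∀ s ∈ S, ⟪s, u⟫_ℂ = ⟪s, v⟫_ℂ) : u = v := by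
  have horth : u - v ∈ (Submodule.span ℂ S)ᗮ := by
    rw [Submodule.mem_orthogonal]
    intro w hw
    induction hw using Submodule.span_induction with
    | mem x hx => rw [inner_sub_right, h x hx, sub_self]
    | zero => simp
    | add x y _ _ hx hy => rw [inner_add_left, hx, hy, add_zero]
    | smul c x _ hx => rw [inner_smul_left, hx, mul_zero]
  rw [Submodule.topologicalClosure_eq_top_iff.mp hS] at horth
  simpa [sub_eq_zero] using horth

private lemma clm_ext_dense' {E F : Type*} [NormedAddCommGroup E] [InnerProductSpace ℂ E]
    [NormedAddCommGroup F] [InnerProductSpace ℂ F] {S : Set E}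
    (hS : (Submodule.span ℂ S).topologicalClosure = ⊤) {T T' : E →L[ℂ] F}
    (h : ∀ s ∈ S, T s = T' s) : T = T' :=
  ContinuousLinearMap.ext_on
    (Submodule.dense_iff_topologicalClosure_eq_top.mpr hS) h

/-- For a deterministic (multiplicative) state-preserving Markov map
`Φ` with adjoint `Φ^♯`, one has `U_Φ* A₂ U_Φ = Φ^♯(A₂)` for all `A₂ ∈ M₂`, and
`Λ_{Φ^♯}` is a co-isometry: `Λ_{Φ^♯} Λ_{Φ^♯}* = I` on `L_{Φ^♯}`. -/
theorem stmt16
    {H₁ H₂ : Type*} [NormedAddCommGroup H₁] [InnerProductSpace ℂ H₁] [CompleteSpace H₁]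
    [NormedAddCommGroup H₂] [InnerProductSpace ℂ H₂] [CompleteSpace H₂]
    (M₁ : VonNeumannAlgebra H₁) (M₂ : VonNeumannAlgebra H₂) (Ω₁ : H₁) (Ω₂ : H₂)
    (hΩ₁ : ‖Ω₁‖ = 1) (hΩ₂ : ‖Ω₂‖ = 1)
    (hcyc₁ : IsCyclicVec (M₁ : Set (H₁ →L[ℂ] H₁)) Ω₁)
    (hsep₁ : IsSeparatingVec (M₁ : Set (H₁ →L[ℂ] H₁)) Ω₁)
    (hcyc₂ : IsCyclicVec (M₂ : Set (H₂ →L[ℂ] H₂)) Ω₂)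
    (hsep₂ : IsSeparatingVec (M₂ : Set (H₂ →L[ℂ] H₂)) Ω₂)
    -- Φ is a deterministic (multiplicative) state-preserving Markov map
    (Φ : (H₁ →L[ℂ] H₁) →ₗ[ℂ] (H₂ →L[ℂ] H₂))
    (hmem : ∀ A ∈ M₁, Φ A ∈ M₂) (hunital : Φ 1 = 1)
    (hmult : ∀ A ∈ M₁, ∀ B ∈ M₁, Φ (A * B) = Φ A * Φ B)
    (hstar : ∀ A ∈ M₁, Φ (star A) = star (Φ A))
    (hstate : IsStatePreserving (M₁ : Set (H₁ →L[ℂ] H₁)) Ω₁ Ω₂ Φ)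
    -- the adjoint Φ^♯ of Φ
    (Φs : (H₂ →L[ℂ] H₂) →ₗ[ℂ] (H₁ →L[ℂ] H₁))
    (hmems : ∀ B ∈ M₂, Φs B ∈ M₁) (hunitals : Φs 1 = 1)
    (hCPs : IsCP (M₂ : Set (H₂ →L[ℂ] H₂)) Φs)
    (hstates : IsStatePreserving (M₂ : Set (H₂ →L[ℂ] H₂)) Ω₂ Ω₁ Φs)
    (hadj : ∀ A ∈ M₁, ∀ B ∈ M₂, ⟪Ω₂, B (Φ A Ω₂)⟫_ℂ = ⟪Ω₁, Φs B (A Ω₁)⟫_ℂ)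
    (U : H₁ →L[ℂ] H₂) (hU : ∀ A ∈ M₁, U (A Ω₁) = Φ A Ω₂)
    (Ls : Type*) [NormedAddCommGroup Ls] [InnerProductSpace ℂ Ls] [CompleteSpace Ls]
    (Ss : StinespringData (M₂ : Set (H₂ →L[ℂ] H₂)) Φs Ls)
    (Λ : H₂ →L[ℂ] Ls) (hΛ : ∀ B ∈ M₂, Λ (B Ω₂) = Ss.emb B Ω₁) :
    (∀ A₂ ∈ M₂, adjoint U ∘L A₂ ∘L U = Φs A₂) ∧
      Λ ∘L adjoint Λ = 1 := by
  -- basic memberships and abbreviations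
  have h1₁ : (1 : H₁ →L[ℂ] H₁) ∈ M₁ := one_mem _
  have h1₂ : (1 : H₂ →L[ℂ] H₂) ∈ M₂ := one_mem _
  have hc1 : (Submodule.span ℂ {x : H₁ | ∃ A ∈ (M₁ : Set (H₁ →L[ℂ] H₁)), x = A Ω₁}).topologicalClosure = ⊤ := hcyc₁
  have hc2 : (Submodule.span ℂ {x : H₂ | ∃ B ∈ (M₂ : Set (H₂ →L[ℂ] H₂)), x = B Ω₂}).topologicalClosure = ⊤ := hcyc₂
  -- the state computation ⟪Ω₂, Φ(D* E)Ω₂⟫ = ⟪D Ω₁, E Ω₁⟫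
  have hsadd : ∀ D ∈ M₁, ∀ E ∈ M₁, ⟪Ω₂, Φ (star D * E) Ω₂⟫_ℂ = ⟪D Ω₁, E Ω₁⟫_ℂ := by
    intro D hD E hE
    rw [hstate _ (mul_mem (star_mem hD) hE), ContinuousLinearMap.mul_apply,
      ContinuousLinearMap.star_eq_adjoint, ContinuousLinearMap.adjoint_inner_right]
  -- Φ(D*) * Y applied, moved to the left slot
  have hstar_apply : ∀ D ∈ M₁, ∀ (Y : H₂ →L[ℂ] H₂) (v : H₂),
      ⟪Ω₂, (star (Φ D) * Y) v⟫_ℂ = ⟪Φ D Ω₂, Y v⟫_ℂ := by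
    intro D hD Y v
    rw [ContinuousLinearMap.mul_apply, ContinuousLinearMap.star_eq_adjoint,
      ContinuousLinearMap.adjoint_inner_right]
  -- key identity (†): emb (Φ D) Ω₁ = emb 1 (D Ω₁)
  have hdag : ∀ D ∈ M₁, Ss.emb (Φ D) Ω₁ = Ss.emb 1 (D Ω₁) := by
    intro D hD
    have hΦD : Φ D ∈ M₂ := hmem D hD
    have hΦDs : Φ (star D) ∈ M₂ := hmem _ (star_mem hD)
    have t11 : ⟪Ss.emb (Φ D) Ω₁, Ss.emb (Φ D) Ω₁⟫_ℂ = ⟪D Ω₁, D Ω₁⟫_ℂ := by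
      rw [Ss.inner_emb _ _ hΦD hΦD, ← hstar D hD, ← hmult _ (star_mem hD) _ hD,
        hstates _ (hmem _ (mul_mem (star_mem hD) hD)), hsadd D hD D hD]
    have t12 : ⟪Ss.emb (Φ D) Ω₁, Ss.emb 1 (D Ω₁)⟫_ℂ = ⟪D Ω₁, D Ω₁⟫_ℂ := by
      rw [Ss.inner_emb _ _ hΦD h1₂, mul_one, ← hstar D hD,
        ← hadj D hD _ hΦDs, ← ContinuousLinearMap.mul_apply,
        ← hmult _ (star_mem hD) _ hD, hsadd D hD D hD]
    have t21 : ⟪Ss.emb 1 (D Ω₁), Ss.emb (Φ D) Ω₁⟫_ℂ = ⟪D Ω₁, D Ω₁⟫_ℂ := by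
      rw [← inner_conj_symm, t12, inner_conj_symm]
    have t22 : ⟪Ss.emb 1 (D Ω₁), Ss.emb 1 (D Ω₁)⟫_ℂ = ⟪D Ω₁, D Ω₁⟫_ℂ := by
      rw [Ss.inner_emb _ _ h1₂ h1₂, mul_one, star_one, hunitals,
        ContinuousLinearMap.one_apply]
    have hz : ⟪Ss.emb (Φ D) Ω₁ - Ss.emb 1 (D Ω₁),
        Ss.emb (Φ D) Ω₁ - Ss.emb 1 (D Ω₁)⟫_ℂ = 0 := by
      rw [inner_sub_left, inner_sub_right, inner_sub_right, t11, t12, t21, t22]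
      ring
    rw [← sub_eq_zero]
    exact inner_self_eq_zero.mp hz
  -- key pairing identity
  have key1 : ∀ D ∈ M₁, ∀ A ∈ M₁, ∀ B ∈ M₂,
      ⟪D Ω₁, Φs B (A Ω₁)⟫_ℂ = ⟪Φ D Ω₂, B (Φ A Ω₂)⟫_ℂ := by
    intro D hD A hA B hB
    have : ⟪D Ω₁, Φs B (A Ω₁)⟫_ℂ = ⟪Ss.emb 1 (D Ω₁), Ss.emb B (A Ω₁)⟫_ℂ := by
      rw [Ss.inner_emb _ _ h1₂ hB, star_one, one_mul]
    rw [this, ← hdag D hD, Ss.inner_emb _ _ (hmem D hD) hB,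
      ← hadj A hA _ (mul_mem (star_mem (hmem D hD)) hB), hstar_apply D hD]
  -- Part 1: U* A₂ U = Φs A₂
  have part1 : ∀ A₂ ∈ M₂, adjoint U ∘L A₂ ∘L U = Φs A₂ := by
    intro A₂ hA₂
    apply clm_ext_dense' hc1
    rintro s ⟨A, hA, rfl⟩
    apply inner_ext_dense' hc1
    rintro t ⟨D, hD, rfl⟩
    rw [key1 D hD A hA A₂ hA₂, ContinuousLinearMap.comp_apply,
      ContinuousLinearMap.comp_apply, ContinuousLinearMap.adjoint_inner_right,
      hU A hA, hU D hD]
  -- key identity for emb : emb X (A Ω₁) = emb (X * Φ A) Ω₁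
  have key2 : ∀ X ∈ M₂, ∀ A ∈ M₁, Ss.emb X (A Ω₁) = Ss.emb (X * Φ A) Ω₁ := by
    intro X hX A hA
    have hXA : X * Φ A ∈ M₂ := mul_mem hX (hmem A hA)
    have hstarmul : ∀ v w : H₂, ⟪Ω₂, (star (X * Φ A) * X) v⟫_ℂ = ⟪(X * Φ A) Ω₂, X v⟫_ℂ := by
      intro v w
      rw [ContinuousLinearMap.mul_apply, ContinuousLinearMap.star_eq_adjoint,
        ContinuousLinearMap.adjoint_inner_right]
    set c : ℂ := ⟪X (Φ A Ω₂), X (Φ A Ω₂)⟫_ℂ with hc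
    have happ : (X * Φ A) Ω₂ = X (Φ A Ω₂) := rfl
    have t1 : ⟪Ss.emb X (A Ω₁), Ss.emb X (A Ω₁)⟫_ℂ = c := by
      rw [Ss.inner_emb _ _ hX hX, key1 A hA A hA _ (mul_mem (star_mem hX) hX),
        ContinuousLinearMap.mul_apply, ContinuousLinearMap.star_eq_adjoint,
        ContinuousLinearMap.adjoint_inner_right]
    have t3 : ⟪Ss.emb (X * Φ A) Ω₁, Ss.emb X (A Ω₁)⟫_ℂ = c := by
      rw [Ss.inner_emb _ _ hXA hX, ← hadj A hA _ (mul_mem (star_mem hXA) hX),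
        hstarmul _ (Φ A Ω₂), happ]
    have t2 : ⟪Ss.emb X (A Ω₁), Ss.emb (X * Φ A) Ω₁⟫_ℂ = c := by
      rw [← inner_conj_symm, t3, hc, inner_conj_symm]
    have t4 : ⟪Ss.emb (X * Φ A) Ω₁, Ss.emb (X * Φ A) Ω₁⟫_ℂ = c := by
      rw [Ss.inner_emb _ _ hXA hXA, hstates _ (mul_mem (star_mem hXA) hXA),
        ContinuousLinearMap.mul_apply, ContinuousLinearMap.star_eq_adjoint,
        ContinuousLinearMap.adjoint_inner_right, happ]
    have hz : ⟪Ss.emb X (A Ω₁) - Ss.emb (X * Φ A) Ω₁,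
        Ss.emb X (A Ω₁) - Ss.emb (X * Φ A) Ω₁⟫_ℂ = 0 := by
      rw [inner_sub_left, inner_sub_right, inner_sub_right, t1, t2, t3, t4]
      ring
    rw [← sub_eq_zero]
    exact inner_self_eq_zero.mp hz
  -- Λ is an isometry
  have isoΛ : adjoint Λ ∘L Λ = 1 := by
    apply clm_ext_dense' hc2
    rintro s ⟨B, hB, rfl⟩
    apply inner_ext_dense' hc2
    rintro t ⟨B', hB', rfl⟩
    rw [ContinuousLinearMap.comp_apply, ContinuousLinearMap.adjoint_inner_right,
      hΛ B hB, hΛ B' hB', Ss.inner_emb _ _ hB' hB,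
      hstates _ (mul_mem (star_mem hB') hB), ContinuousLinearMap.mul_apply,
      ContinuousLinearMap.star_eq_adjoint, ContinuousLinearMap.adjoint_inner_right,
      ContinuousLinearMap.one_apply]
  -- each emb B is continuous
  have embCont : ∀ B ∈ M₂, ∃ g : H₁ →L[ℂ] Ls, ∀ h, g h = Ss.emb B h := by
    intro B hB
    have hQ : ∀ h : H₁, ‖Ss.emb B h‖ ≤ Real.sqrt ‖Φs (star B * B)‖ * ‖h‖ := by
      intro h
      have h1 : ‖Ss.emb B h‖ ^ 2 ≤ ‖Φs (star B * B)‖ * ‖h‖ ^ 2 := by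
        have e1 : (‖Ss.emb B h‖ : ℝ) ^ 2
            = RCLike.re ⟪Ss.emb B h, Ss.emb B h⟫_ℂ := (inner_self_eq_norm_sq _).symm
        rw [e1, Ss.inner_emb _ _ hB hB]
        calc RCLike.re ⟪h, Φs (star B * B) h⟫_ℂ
            ≤ ‖⟪h, Φs (star B * B) h⟫_ℂ‖ := RCLike.re_le_norm _
          _ ≤ ‖h‖ * ‖Φs (star B * B) h‖ := norm_inner_le_norm _ _
          _ ≤ ‖h‖ * (‖Φs (star B * B)‖ * ‖h‖) := by
              gcongr; exact ContinuousLinearMap.le_opNorm _ _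
          _ = ‖Φs (star B * B)‖ * ‖h‖ ^ 2 := by ring
      have h2 : ‖Ss.emb B h‖ = Real.sqrt (‖Ss.emb B h‖ ^ 2) :=
        (Real.sqrt_sq (norm_nonneg _)).symm
      rw [h2]
      calc Real.sqrt (‖Ss.emb B h‖ ^ 2) ≤ Real.sqrt (‖Φs (star B * B)‖ * ‖h‖ ^ 2) :=
            Real.sqrt_le_sqrt h1
        _ = Real.sqrt ‖Φs (star B * B)‖ * ‖h‖ := by
            rw [Real.sqrt_mul (norm_nonneg _), Real.sqrt_sq (norm_nonneg _)]
    exact ⟨LinearMap.mkContinuous (Ss.emb B) _ hQ, fun h => rfl⟩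
  -- range of Λ has dense span
  set R : Submodule ℂ Ls := LinearMap.range (Λ : H₂ →ₗ[ℂ] Ls) with hRdef
  have hmemRc : ∀ B ∈ M₂, ∀ h : H₁, Ss.emb B h ∈ R.topologicalClosure := by
    intro B hB h
    obtain ⟨g, hg⟩ := embCont B hB
    have hsub : (Submodule.span ℂ {x : H₁ | ∃ A ∈ (M₁ : Set (H₁ →L[ℂ] H₁)),
        x = A Ω₁}).topologicalClosure ≤ R.topologicalClosure.comap (g : H₁ →ₗ[ℂ] Ls) := by
      apply Submodule.topologicalClosure_minimal
      · rw [Submodule.span_le]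
        rintro x ⟨A, hA, rfl⟩
        have hgx : g (A Ω₁) = Λ ((B * Φ A) Ω₂) := by
          rw [hg, key2 B hB A hA, ← hΛ _ (mul_mem hB (hmem A hA))]
        have : g (A Ω₁) ∈ R.topologicalClosure :=
          hgx ▸ R.le_topologicalClosure ⟨_, rfl⟩
        exact this
      · exact IsClosed.preimage g.continuous R.isClosed_topologicalClosure
    have hh : h ∈ (Submodule.span ℂ {x : H₁ | ∃ A ∈ (M₁ : Set (H₁ →L[ℂ] H₁)),
        x = A Ω₁}).topologicalClosure := by rw [hc1]; trivial
    have := hsub hh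
    rw [Submodule.mem_comap] at this
    simpa [hg] using this
  have hRtop : R.topologicalClosure = ⊤ := by
    rw [← top_le_iff, ← Ss.dense_span]
    apply Submodule.topologicalClosure_minimal
    · rw [Submodule.span_le]
      rintro x ⟨B, hB, h, rfl⟩
      exact hmemRc B hB h
    · exact R.isClosed_topologicalClosure
  -- conclude
  have hdense_span : Dense ((Submodule.span ℂ (Set.range Λ)) : Set Ls) := by
    have hsp : Submodule.span ℂ (Set.range Λ) = R := by
      rw [← ContinuousLinearMap.coe_coe Λ, ← LinearMap.coe_range (Λ : H₂ →ₗ[ℂ] Ls), Submodule.span_eq]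
    rw [hsp]
    exact Submodule.dense_iff_topologicalClosure_eq_top.mpr hRtop
  refine ⟨part1, ContinuousLinearMap.ext_on hdense_span ?_⟩
  rintro z ⟨y, rfl⟩
  have hy : adjoint Λ (Λ y) = y := by
    have := ContinuousLinearMap.ext_iff.mp isoΛ y
    simpa using this
  simp [ContinuousLinearMap.comp_apply, hy]
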